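/- arXiv:1502.03029 — 2 statements merged into one kernel-verified Lean document; each statement's English description precedes it below -/
import Mathlib

section
/- For n ≥ 7, the number of 4-element subsets of Z/nZ with exactly three cyclic components (necessarily one interval of length 2 and two singletons, pairwise non-adjacent) is n(n-5)(n-6)/2. -/
/-- The number of maximal cyclic intervals (connected components) of a subset
`S` of `ZMod n`: the full set is one single component; otherwise the components
are counted by their left endpoints, i.e. elements `i ∈ S` with `i - 1 ∉ S`. -/
def cyclicComponents (n : ℕ) [NeZero n] (S : Finset (ZMod n)) : ℕ :=
  if S = Finset.univ then 1 else (S.filter fun i => i - 1 ∉ S).card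

set_option linter.unusedSectionVars false

open Finset

namespace CountComponentsAux

variable {n : ℕ} [NeZero n]

lemma myCastInj {i j : ℕ} (hi : i < n) (hj : j < n) : (i : ZMod n) = j ↔ i = j := by
  constructor
  · intro h
    have := congrArg ZMod.val h
    rwa [ZMod.val_cast_of_lt hi, ZMod.val_cast_of_lt hj] at this
  · rintro rfl; rfl

lemma myAddCastInj (a : ZMod n) {i j : ℕ} (hi : i < n) (hj : j < n) :
    a + i = a + j ↔ i = j := by
  rw [add_right_inj, myCastInj hi hj]

/-- the 4-element configuration -/
def Cfg (a : ZMod n) (u v : ℕ) : Finset (ZMod n) := {a, a + 1, a + (u : ℕ), a + (v : ℕ)}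

lemma mem_Cfg {a z : ZMod n} {u v : ℕ} :
    z ∈ Cfg a u v ↔ z = a ∨ z = a + 1 ∨ z = a + (u : ℕ) ∨ z = a + (v : ℕ) := by
  simp [Cfg]

lemma add_mem_Cfg_iff (a : ZMod n) {u v w : ℕ} (hu : u < n) (hv : v < n) (hw : w < n)
    (hn : 2 ≤ n) :
    a + (w : ℕ) ∈ Cfg a u v ↔ w = 0 ∨ w = 1 ∨ w = u ∨ w = v := by
  have e0 : (a : ZMod n) = a + ((0:ℕ) : ZMod n) := by simp
  have e1 : a + 1 = a + ((1:ℕ) : ZMod n) := by simp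
  rw [mem_Cfg]
  constructor
  · rintro (h|h|h|h)
    · exact Or.inl ((myAddCastInj a hw (show 0 < n by omega)).1 (by rw [← e0]; exact h))
    · exact Or.inr (Or.inl ((myAddCastInj a hw (show 1 < n by omega)).1 (by rw [← e1]; exact h)))
    · exact Or.inr (Or.inr (Or.inl ((myAddCastInj a hw hu).1 h)))
    · exact Or.inr (Or.inr (Or.inr ((myAddCastInj a hw hv).1 h)))
  · rintro (rfl|rfl|rfl|rfl) <;> simp

lemma Cfg_eq_image (a : ZMod n) (u v : ℕ) :
    Cfg a u v = ({0, 1, u, v} : Finset ℕ).image (fun w => a + (w : ℕ)) := by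
  simp [Cfg, Finset.image_insert]

lemma card_image_shift (a : ZMod n) (T : Finset ℕ) (hT : ∀ w ∈ T, w < n) :
    (T.image fun w => a + (w : ℕ)).card = T.card := by
  apply Finset.card_image_of_injOn
  intro x hx y hy h
  exact (myAddCastInj a (hT x hx) (hT y hy)).1 h

section Main

variable {u v : ℕ} {a : ZMod n}

lemma card_Cfg (hn : 7 ≤ n) (hu : 3 ≤ u) (huv : u + 2 ≤ v) (hv : v ≤ n - 2) :
    (Cfg a u v).card = 4 := by
  rw [Cfg_eq_image, card_image_shift a _ (by intro w hw; simp at hw; rcases hw with rfl|rfl|rfl|rfl <;> omega)]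
  rw [card_insert_of_notMem (by simp; omega), card_insert_of_notMem (by simp; omega),
    card_insert_of_notMem (by simp; omega), card_singleton]

-- predecessor facts
lemma predA (hn : 7 ≤ n) (hu : 3 ≤ u) (huv : u + 2 ≤ v) (hv : v ≤ n - 2) :
    a - 1 ∉ Cfg a u v := by
  have h1 : a - 1 = a + ((n - 1 : ℕ) : ZMod n) := by
    rw [Nat.cast_sub (by omega), ZMod.natCast_self]
    push_cast
    ring
  rw [h1, add_mem_Cfg_iff a (by omega) (by omega) (by omega) (by omega)]
  omega

lemma predU (hn : 7 ≤ n) (hu : 3 ≤ u) (huv : u + 2 ≤ v) (hv : v ≤ n - 2) :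
    a + (u : ℕ) - 1 ∉ Cfg a u v := by
  have h1 : a + (u : ℕ) - 1 = a + ((u - 1 : ℕ) : ZMod n) := by
    rw [Nat.cast_sub (by omega)]
    push_cast
    ring
  rw [h1, add_mem_Cfg_iff a (by omega) (by omega) (by omega) (by omega)]
  omega

lemma predV (hn : 7 ≤ n) (hu : 3 ≤ u) (huv : u + 2 ≤ v) (hv : v ≤ n - 2) :
    a + (v : ℕ) - 1 ∉ Cfg a u v := by
  have h1 : a + (v : ℕ) - 1 = a + ((v - 1 : ℕ) : ZMod n) := by
    rw [Nat.cast_sub (by omega)]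
    push_cast
    ring
  rw [h1, add_mem_Cfg_iff a (by omega) (by omega) (by omega) (by omega)]
  omega

lemma filter_Cfg (hn : 7 ≤ n) (hu : 3 ≤ u) (huv : u + 2 ≤ v) (hv : v ≤ n - 2) :
    ((Cfg a u v).filter fun i => i - 1 ∉ Cfg a u v) = {a, a + (u : ℕ), a + (v : ℕ)} := by
  rw [show ((Cfg a u v).filter fun i => i - 1 ∉ Cfg a u v)
      = (({a, a + 1, a + (u : ℕ), a + (v : ℕ)} : Finset (ZMod n)).filter
        fun i => i - 1 ∉ Cfg a u v) from rfl]
  rw [Finset.filter_insert, Finset.filter_insert, Finset.filter_insert, Finset.filter_singleton]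
  rw [if_pos (predA hn hu huv hv), if_neg, if_pos (predU hn hu huv hv),
    if_pos (predV hn hu huv hv)]
  rw [not_not, add_sub_cancel_right]
  exact mem_Cfg.2 (Or.inl rfl)

lemma comp_Cfg (hn : 7 ≤ n) (hu : 3 ≤ u) (huv : u + 2 ≤ v) (hv : v ≤ n - 2) :
    cyclicComponents n (Cfg a u v) = 3 := by
  have hne : Cfg a u v ≠ Finset.univ := by
    intro h
    have := card_Cfg (a := a) hn hu huv hv
    rw [h, Finset.card_univ, ZMod.card] at this
    omega
  rw [cyclicComponents, if_neg hne, filter_Cfg hn hu huv hv]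
  rw [show ({a, a + (u : ℕ), a + (v : ℕ)} : Finset (ZMod n))
      = ({0, u, v} : Finset ℕ).image (fun w => a + (w : ℕ)) by simp [Finset.image_insert]]
  rw [card_image_shift a _ (by intro w hw; simp at hw; rcases hw with rfl|rfl|rfl <;> omega)]
  rw [card_insert_of_notMem (by simp; omega), card_insert_of_notMem (by simp; omega),
    card_singleton]

lemma pred_mem_iff (hn : 7 ≤ n) (hu : 3 ≤ u) (huv : u + 2 ≤ v) (hv : v ≤ n - 2) {z : ZMod n} :
    (z ∈ Cfg a u v ∧ z - 1 ∈ Cfg a u v) ↔ z = a + 1 := by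
  constructor
  · rintro ⟨hz, hz'⟩
    rcases mem_Cfg.1 hz with rfl|rfl|rfl|rfl
    · exact absurd hz' (predA hn hu huv hv)
    · rfl
    · exact absurd hz' (predU hn hu huv hv)
    · exact absurd hz' (predV hn hu huv hv)
  · rintro rfl
    refine ⟨mem_Cfg.2 (Or.inr (Or.inl rfl)), ?_⟩
    rw [add_sub_cancel_right]
    exact mem_Cfg.2 (Or.inl rfl)

lemma Cfg_inj {a' : ZMod n} {u' v' : ℕ} (hn : 7 ≤ n)
    (hu : 3 ≤ u) (huv : u + 2 ≤ v) (hv : v ≤ n - 2)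
    (hu' : 3 ≤ u') (huv' : u' + 2 ≤ v') (hv' : v' ≤ n - 2)
    (h : Cfg a u v = Cfg a' u' v') : a = a' ∧ u = u' ∧ v = v' := by
  have ha : a = a' := by
    have h1 : a + 1 = a' + 1 := by
      apply (pred_mem_iff (a := a') hn hu' huv' hv').1
      rw [← h]
      exact (pred_mem_iff hn hu huv hv).2 rfl
    exact add_right_cancel h1
  subst ha
  have key : ∀ w : ℕ, 3 ≤ w → w ≤ n - 2 → a + (w : ℕ) ∈ Cfg a u' v' → w = u' ∨ w = v' := by
    intro w h3 h2 hw
    have := (add_mem_Cfg_iff a (u := u') (v := v') (by omega) (by omega) (by omega) (by omega)).1 hw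
    omega
  have k1 : u = u' ∨ u = v' := key u hu (by omega) (h ▸ mem_Cfg.2 (Or.inr (Or.inr (Or.inl rfl))))
  have k2 : v = u' ∨ v = v' := key v (by omega) hv (h ▸ mem_Cfg.2 (Or.inr (Or.inr (Or.inr rfl))))
  have key' : ∀ w : ℕ, 3 ≤ w → w ≤ n - 2 → a + (w : ℕ) ∈ Cfg a u v → w = u ∨ w = v := by
    intro w h3 h2 hw
    have := (add_mem_Cfg_iff a (u := u) (v := v) (by omega) (by omega) (by omega) (by omega)).1 hw
    omega
  have k3 : u' = u ∨ u' = v := key' u' hu' (by omega) (h.symm ▸ mem_Cfg.2 (Or.inr (Or.inr (Or.inl rfl))))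
  have k4 : v' = u ∨ v' = v := key' v' (by omega) hv' (h.symm ▸ mem_Cfg.2 (Or.inr (Or.inr (Or.inr rfl))))
  exact ⟨rfl, by omega, by omega⟩

end Main

lemma Cfg_surj (hn : 7 ≤ n) {S : Finset (ZMod n)} (h4 : S.card = 4)
    (h3 : cyclicComponents n S = 3) :
    ∃ (a : ZMod n) (u v : ℕ), 3 ≤ u ∧ u + 2 ≤ v ∧ v ≤ n - 2 ∧ S = Cfg a u v := by
  haveI : Fact (1 < n) := ⟨by omega⟩
  have hne : S ≠ Finset.univ := by
    intro h
    rw [h, Finset.card_univ, ZMod.card] at h4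
    omega
  rw [cyclicComponents, if_neg hne] at h3
  set L := S.filter fun i => i - 1 ∉ S with hL
  have hLS : L ⊆ S := Finset.filter_subset _ _
  have hsd : (S \ L).card = 1 := by
    rw [Finset.card_sdiff_of_subset hLS, h4, h3]
  obtain ⟨b, hb⟩ := Finset.card_eq_one.1 hsd
  have hbS : b ∈ S := by
    have : b ∈ S \ L := hb ▸ Finset.mem_singleton_self b
    exact (Finset.mem_sdiff.1 this).1
  have hbL : b ∉ L := by
    have : b ∈ S \ L := hb ▸ Finset.mem_singleton_self b
    exact (Finset.mem_sdiff.1 this).2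
  have hbpred : b - 1 ∈ S := by
    by_contra hc
    exact hbL (Finset.mem_filter.2 ⟨hbS, hc⟩)
  set a := b - 1 with hadef
  have hab : b = a + 1 := by rw [hadef]; ring
  have haS : a ∈ S := hbpred
  have haL : a ∈ L := by
    by_contra hc
    have : a ∈ S \ L := Finset.mem_sdiff.2 ⟨haS, hc⟩
    rw [hb, Finset.mem_singleton] at this
    rw [hadef] at this
    exact one_ne_zero (sub_eq_self.1 this)
  have hcard2 : (L.erase a).card = 2 := by
    rw [Finset.card_erase_of_mem haL, h3]
  obtain ⟨c, d, hcd, hLe⟩ := Finset.card_eq_two.1 hcard2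
  have hcL : c ∈ L := (Finset.erase_subset _ _) (hLe ▸ Finset.mem_insert_self c {d})
  have hdL : d ∈ L := (Finset.erase_subset _ _)
    (hLe ▸ Finset.mem_insert.2 (Or.inr (Finset.mem_singleton_self d)))
  have hca : c ≠ a := by
    intro h; have := hLe ▸ Finset.mem_insert_self c {d}; rw [h] at this
    exact (Finset.notMem_erase a L) this
  have hda : d ≠ a := by
    intro h
    have : d ∈ L.erase a := hLe ▸ Finset.mem_insert.2 (Or.inr (Finset.mem_singleton_self d))
    rw [h] at this
    exact (Finset.notMem_erase a L) this
  -- generic facts about elements of L other than a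
  have key : ∀ e : ZMod n, e ∈ L → e ≠ a →
      3 ≤ (e - a).val ∧ (e - a).val ≤ n - 2 := by
    intro e heL hea
    have heS : e ∈ S := hLS heL
    have hepred : e - 1 ∉ S := (Finset.mem_filter.1 heL).2
    set w := (e - a).val with hw
    have hwe : a + (w : ℕ) = e := by
      rw [hw, ZMod.natCast_rightInverse (e - a)]; ring
    have hwlt : w < n := ZMod.val_lt _
    have h0 : w ≠ 0 := by
      intro h; rw [h] at hwe; simp at hwe; exact hea hwe.symm
    have h1 : w ≠ 1 := by
      intro h; rw [h] at hwe
      apply hbL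
      rw [hab]
      have heq : a + 1 = e := by rw [← hwe]; norm_num
      rw [heq]; exact heL
    have h2 : w ≠ 2 := by
      intro h; rw [h] at hwe
      apply hepred
      rw [← hwe]
      have : a + ((2:ℕ) : ZMod n) - 1 = a + 1 := by push_cast; ring
      rw [this, ← hab]
      exact hbS
    have hn1 : w ≠ n - 1 := by
      intro h; rw [h] at hwe
      have : a + ((n - 1 : ℕ) : ZMod n) = a - 1 := by
        rw [Nat.cast_sub (by omega), ZMod.natCast_self]; push_cast; ring
      rw [this] at hwe
      exact (Finset.mem_filter.1 haL).2 (hwe ▸ heS)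
    exact ⟨by omega, by omega⟩
  have sep : ∀ e f : ZMod n, e ∈ L → f ∈ L → e ≠ f →
      (f - a).val ≠ (e - a).val + 1 := by
    intro e f heL hfL hef h
    have hfe : f = e + 1 := by
      have he : a + ((e - a).val : ℕ) = e := by
        rw [ZMod.natCast_rightInverse (e - a)]; ring
      have hf : a + ((f - a).val : ℕ) = f := by
        rw [ZMod.natCast_rightInverse (f - a)]; ring
      rw [← hf, h, Nat.cast_add, Nat.cast_one, ← add_assoc, he]
    apply (Finset.mem_filter.1 hfL).2
    rw [hfe, add_sub_cancel_right]
    exact hLS heL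
  obtain ⟨hc3, hc2⟩ := key c hcL hca
  obtain ⟨hd3, hd2⟩ := key d hdL hda
  have hcdne : (c - a).val ≠ (d - a).val := by
    intro h
    apply hcd
    have hc' : a + ((c - a).val : ℕ) = c := by rw [ZMod.natCast_rightInverse (c - a)]; ring
    have hd' : a + ((d - a).val : ℕ) = d := by rw [ZMod.natCast_rightInverse (d - a)]; ring
    rw [← hc', ← hd', h]
  have sep1 := sep c d hcL hdL hcd
  have sep2 := sep d c hdL hcL hcd.symm
  have hSeq : S = {a, a + 1, c, d} := by
    have h1 : S = insert b L := by
      rw [← Finset.sdiff_union_of_subset hLS, hb]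
      ext z; simp
    have h2 : L = insert a (L.erase a) := (Finset.insert_erase haL).symm
    rw [h1, h2, hLe, hab]
    ext z
    simp [Finset.mem_insert]
    tauto
  set uc := (c - a).val
  set ud := (d - a).val
  have hc' : a + (uc : ℕ) = c := by rw [ZMod.natCast_rightInverse (c - a)]; ring
  have hd' : a + (ud : ℕ) = d := by rw [ZMod.natCast_rightInverse (d - a)]; ring
  rcases lt_or_gt_of_ne hcdne with hlt | hlt
  · refine ⟨a, uc, ud, by omega, by omega, by omega, ?_⟩
    rw [hSeq, Cfg, hc', hd']
  · refine ⟨a, ud, uc, by omega, by omega, by omega, ?_⟩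
    rw [hSeq, Cfg, hc', hd']
    ext z; simp; tauto

end CountComponentsAux

open CountComponentsAux in
/-- For `n ≥ 7`, the number of 4-element subsets of `ZMod n` with exactly three cyclic
components is `n * (n - 5) * (n - 6) / 2`. -/
theorem count_components_three (n : ℕ) [NeZero n] (hn : 7 ≤ n) :
    (Finset.univ.filter fun S : Finset (ZMod n) =>
      S.card = 4 ∧ cyclicComponents n S = 3).card = n * (n - 5) * (n - 6) / 2 := by
  classical
  set m := n - 6 with hm
  set src : Finset (ZMod n × Σ _ : ℕ, ℕ) :=
    Finset.univ ×ˢ (Finset.range m).sigma (fun y => Finset.range (y + 1)) with hsrc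
  have hconstraints : ∀ p : ZMod n × Σ _ : ℕ, ℕ, p ∈ src →
      3 ≤ p.2.2 + 3 ∧ (p.2.2 + 3) + 2 ≤ p.2.1 + 5 ∧ p.2.1 + 5 ≤ n - 2 := by
    rintro ⟨a, y, x⟩ hp
    simp only [hsrc, Finset.mem_product, Finset.mem_sigma, Finset.mem_range] at hp
    dsimp only
    omega
  have hbij : src.card = (Finset.univ.filter fun S : Finset (ZMod n) =>
      S.card = 4 ∧ cyclicComponents n S = 3).card := by
    apply Finset.card_bij (fun p _ => Cfg p.1 (p.2.2 + 3) (p.2.1 + 5))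
    · rintro p hp
      obtain ⟨h1, h2, h3⟩ := hconstraints p hp
      rw [Finset.mem_filter]
      exact ⟨Finset.mem_univ _, card_Cfg hn h1 h2 h3, comp_Cfg hn h1 h2 h3⟩
    · rintro ⟨a, y, x⟩ hp ⟨a', y', x'⟩ hp' h
      obtain ⟨h1, h2, h3⟩ := hconstraints _ hp
      obtain ⟨h1', h2', h3'⟩ := hconstraints _ hp'
      obtain ⟨ha, hu, hv⟩ := Cfg_inj hn h1 h2 h3 h1' h2' h3' h
      simp only at ha hu hv ⊢
      refine Prod.ext ha ?_
      simp only
      have : y = y' := by omega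
      have : x = x' := by omega
      subst ‹y = y'›; subst ‹x = x'›; rfl
    · intro S hS
      rw [Finset.mem_filter] at hS
      obtain ⟨a, u, v, hu, huv, hv, hSeq⟩ := Cfg_surj hn hS.2.1 hS.2.2
      refine ⟨⟨a, v - 5, u - 3⟩, ?_, ?_⟩
      · simp only [hsrc, Finset.mem_product, Finset.mem_sigma, Finset.mem_range]
        exact ⟨Finset.mem_univ _, by omega, by omega⟩
      · simp only
        rw [hSeq]
        congr 1 <;> omega
  rw [← hbij]
  have hsum : (∑ y ∈ Finset.range m, (y + 1)) * 2 = m * (m + 1) := by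
    have h1 : ∑ y ∈ Finset.range m, (y + 1) = ∑ i ∈ Finset.range (m + 1), i := by
      rw [Finset.sum_range_succ']
      simp
    rw [h1, Finset.sum_range_id_mul_two]
    simp [Nat.mul_comm]
  have hcard : src.card = n * ∑ y ∈ Finset.range m, (y + 1) := by
    rw [hsrc, Finset.card_product, Finset.card_univ, ZMod.card, Finset.card_sigma]
    simp
  rw [hcard]
  have h5 : n - 5 = m + 1 := by omega
  rw [h5]
  have key1 : n * (m + 1) * m = n * ((∑ y ∈ Finset.range m, (y + 1)) * 2) := by
    rw [hsum]; ring
  have key2 : n * ((∑ y ∈ Finset.range m, (y + 1)) * 2)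
      = (n * ∑ y ∈ Finset.range m, (y + 1)) * 2 := by ring
  omega
end

section
/- Suppose for each 4-element subset S of Z/nZ we have a finite set Q(S) of 'quadrisecants' satisfying: |Q(S)| = 0 if S has 1 component or 2 components one of which is a singleton; |Q(S)| ≤ 1 if S has two components each of size 2, or 3 components; |Q(S)| ≤ 2 if S has 4 components. If every quadrisecant of the knot belongs to Q(S) for some S, and the Q(S) are pairwise disjoint, then the total number of quadrisecants is at most S₂,₂(n) + S₃(n) + 2·S₄(n) = n(n-3)(n-4)(n-5)/12 for n ≥ 3. -/
set_option linter.unusedSectionVars false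


open Finset

section aux
variable {n : ℕ} [NeZero n]

/-- offsets of the other elements of `S` from `a`. -/
def qKset (n : ℕ) [NeZero n] (S : Finset (ZMod n)) (a : ZMod n) : Finset ℕ :=
  (Finset.Ico 1 n).filter (fun k => a + (k : ZMod n) ∈ S)

lemma mem_qKset {S : Finset (ZMod n)} {a : ZMod n} {k : ℕ} :
    k ∈ qKset n S a ↔ 1 ≤ k ∧ k < n ∧ a + (k : ZMod n) ∈ S := by
  simp [qKset, Finset.mem_Ico, and_assoc]

lemma zmod_cast_inj {j l : ℕ} (hj : j < n) (hl : l < n) (h : (j : ZMod n) = l) : j = l := by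
  have := congrArg ZMod.val h
  rwa [ZMod.val_cast_of_lt hj, ZMod.val_cast_of_lt hl] at this

lemma zmod_rep (a x : ZMod n) : ∃ j, j < n ∧ a + (j : ZMod n) = x := by
  refine ⟨(x - a).val, ZMod.val_lt _, ?_⟩
  rw [ZMod.natCast_val, ZMod.cast_id]
  ring

lemma add_mem_iff {S : Finset (ZMod n)} {a : ZMod n} (ha : a ∈ S) {j : ℕ} (hj : j < n) :
    a + (j : ZMod n) ∈ S ↔ j = 0 ∨ j ∈ qKset n S a := by
  constructor
  · intro h
    rcases Nat.eq_zero_or_pos j with h0 | h1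
    · exact Or.inl h0
    · exact Or.inr (mem_qKset.2 ⟨h1, hj, h⟩)
  · rintro (rfl | hk)
    · simpa using ha
    · exact (mem_qKset.1 hk).2.2

lemma cast_pred {k : ℕ} (hk1 : 1 ≤ k) : ((k : ZMod n)) - 1 = ((k - 1 : ℕ) : ZMod n) := by
  obtain ⟨j, rfl⟩ := Nat.exists_eq_add_of_le hk1
  have h : 1 + j - 1 = j := by omega
  rw [h]; push_cast; ring

lemma cast_n_sub_one (hn : 1 ≤ n) : ((n - 1 : ℕ) : ZMod n) = -1 := by
  have h : ((n - 1 : ℕ) : ZMod n) + 1 = ((n : ℕ) : ZMod n) := by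
    norm_cast
    rw [show n - 1 + 1 = n by omega]
  rw [ZMod.natCast_self] at h
  linear_combination h

lemma card_qKset {S : Finset (ZMod n)} {a : ZMod n} (ha : a ∈ S) (h4 : S.card = 4) :
    (qKset n S a).card = 3 := by
  have hnpos : 0 < n := Nat.pos_of_ne_zero (NeZero.ne n)
  have h0 : (0 : ℕ) ∉ qKset n S a := by simp [mem_qKset]
  have hlt : ∀ k ∈ insert 0 (qKset n S a), k < n := by
    intro k hk
    rcases Finset.mem_insert.1 hk with rfl | hk
    · exact hnpos
    · exact (mem_qKset.1 hk).2.1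
  have hcard : (insert 0 (qKset n S a)).card = S.card := by
    refine Finset.card_bij (fun k _ => a + (k : ZMod n)) ?_ ?_ ?_
    · intro k hk
      rcases Finset.mem_insert.1 hk with rfl | hk
      · simpa using ha
      · exact (mem_qKset.1 hk).2.2
    · intro k1 h1 k2 h2 heq
      exact zmod_cast_inj (hlt _ h1) (hlt _ h2) (by exact add_left_cancel heq)
    · intro x hx
      obtain ⟨j, hj, rfl⟩ := zmod_rep a x
      exact ⟨j, by rw [Finset.mem_insert, ← add_mem_iff ha hj]; exact hx, rfl⟩
  rw [Finset.card_insert_of_notMem h0, h4] at hcard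
  omega

end aux

section aux2
variable {n : ℕ} [NeZero n]


/-- ℕ-side component count -/
def natComp (n : ℕ) (K : Finset ℕ) : ℕ :=
  (if n - 1 ∈ K then 0 else 1) + (K.filter (fun k => ¬(k = 1 ∨ k - 1 ∈ K))).card

/-- ℕ-side "no singleton component" condition -/
def natNoSing (n : ℕ) (K : Finset ℕ) : Prop :=
  (1 ∈ K ∨ n - 1 ∈ K) ∧ ∀ k ∈ K, (k = 1 ∨ k - 1 ∈ K) ∨ (k = n - 1 ∨ k + 1 ∈ K)

lemma pred_mem_iff {S : Finset (ZMod n)} {a : ZMod n} (ha : a ∈ S) (hn3 : 3 ≤ n)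
    {k : ℕ} (hk : k < n) :
    (a + (k : ZMod n)) - 1 ∈ S ↔ (if k = 0 then n - 1 ∈ qKset n S a
      else (k = 1 ∨ k - 1 ∈ qKset n S a)) := by
  split_ifs with h0
  · subst h0
    have : a + ((0:ℕ) : ZMod n) - 1 = a + ((n - 1 : ℕ) : ZMod n) := by
      rw [cast_n_sub_one (by omega)]; push_cast; ring
    rw [this, add_mem_iff ha (by omega)]
    have : ¬ (n - 1 = 0) := by omega
    simp [this]
  · have hk1 : 1 ≤ k := by omega
    have : a + (k : ZMod n) - 1 = a + ((k - 1 : ℕ) : ZMod n) := by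
      rw [← cast_pred hk1]; ring
    rw [this, add_mem_iff ha (by omega)]
    constructor
    · rintro (h | h); · left; omega
      · right; exact h
    · rintro (h | h)
      · left; omega
      · right; exact h

lemma succ_mem_iff {S : Finset (ZMod n)} {a : ZMod n} (ha : a ∈ S) (hn3 : 3 ≤ n)
    {k : ℕ} (hk : k < n) :
    (a + (k : ZMod n)) + 1 ∈ S ↔ (k = n - 1 ∨ k + 1 ∈ qKset n S a) := by
  by_cases hl : k = n - 1
  · subst hl
    have : a + ((n - 1 : ℕ) : ZMod n) + 1 = a := by rw [cast_n_sub_one (by omega)]; ring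
    rw [this]; simp [ha]
  · have : a + (k : ZMod n) + 1 = a + ((k + 1 : ℕ) : ZMod n) := by push_cast; ring
    rw [this, add_mem_iff ha (by omega)]
    constructor
    · rintro (h | h); · omega
      · exact Or.inr h
    · rintro (h | h); · omega
      · exact Or.inr h

lemma card_filter_shift {S : Finset (ZMod n)} {a : ZMod n} (ha : a ∈ S)
    (p : ZMod n → Prop) [DecidablePred p] :
    (S.filter p).card
      = ((insert 0 (qKset n S a)).filter (fun k : ℕ => p (a + (k : ZMod n)))).card := by
  have hnpos : 0 < n := Nat.pos_of_ne_zero (NeZero.ne n)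
  have hlt : ∀ k ∈ insert 0 (qKset n S a), k < n := by
    intro k hk
    rcases Finset.mem_insert.1 hk with rfl | hk
    · exact hnpos
    · exact (mem_qKset.1 hk).2.1
  symm
  refine Finset.card_bij (fun k _ => a + (k : ZMod n)) ?_ ?_ ?_
  · intro k hk
    have hk' := Finset.mem_filter.1 hk
    rw [Finset.mem_filter]
    refine ⟨?_, hk'.2⟩
    rw [add_mem_iff ha (hlt _ hk'.1), ← Finset.mem_insert]
    exact hk'.1
  · intro k1 h1 k2 h2 heq
    exact zmod_cast_inj (hlt _ (Finset.mem_filter.1 h1).1) (hlt _ (Finset.mem_filter.1 h2).1)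
      (add_left_cancel heq)
  · intro x hx
    have hx' := Finset.mem_filter.1 hx
    obtain ⟨j, hj, rfl⟩ := zmod_rep a x
    refine ⟨j, ?_, rfl⟩
    rw [Finset.mem_filter, Finset.mem_insert, ← add_mem_iff ha hj]
    exact ⟨hx'.1, hx'.2⟩

lemma comp_eq {S : Finset (ZMod n)} {a : ZMod n} (ha : a ∈ S) (hSu : S ≠ Finset.univ)
    (hn3 : 3 ≤ n) :
    cyclicComponents n S = natComp n (qKset n S a) := by
  classical
  set K := qKset n S a with hK
  have h0K : (0 : ℕ) ∉ K := by simp [hK, mem_qKset]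
  rw [cyclicComponents, if_neg hSu, card_filter_shift ha (fun i => i - 1 ∉ S)]
  have hcongr : (insert 0 K).filter (fun k : ℕ => (a + (k : ZMod n)) - 1 ∉ S)
      = (insert 0 K).filter (fun k => ¬ (if k = 0 then n - 1 ∈ K
          else (k = 1 ∨ k - 1 ∈ K))) := by
    apply Finset.filter_congr
    intro k hk
    have hk' : k < n := by
      rcases Finset.mem_insert.1 hk with rfl | hk
      · omega
      · exact (mem_qKset.1 hk).2.1
    constructor
    · intro h; exact fun hyp => h ((pred_mem_iff ha hn3 hk').2 hyp)
    · intro h hyp; exact h ((pred_mem_iff ha hn3 hk').1 hyp)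
  rw [hcongr, Finset.filter_insert]
  have hKpart : K.filter (fun k => ¬ (if k = 0 then n - 1 ∈ K else (k = 1 ∨ k - 1 ∈ K)))
      = K.filter (fun k => ¬(k = 1 ∨ k - 1 ∈ K)) := by
    apply Finset.filter_congr
    intro k hk
    have : k ≠ 0 := by rintro rfl; exact h0K hk
    simp [eq_iff_iff, this]
  rw [hKpart]
  by_cases hmem : n - 1 ∈ K
  · rw [if_neg (by simp [hmem]), natComp, if_pos hmem]
    omega
  · rw [if_pos (by simp [hmem]), natComp, if_neg hmem,
      Finset.card_insert_of_notMem (by simp [h0K])]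
    omega

lemma noSing_iff {S : Finset (ZMod n)} {a : ZMod n} (ha : a ∈ S) (hn3 : 3 ≤ n) :
    (∀ i ∈ S, i - 1 ∈ S ∨ i + 1 ∈ S) ↔ natNoSing n (qKset n S a) := by
  set K := qKset n S a with hK
  constructor
  · intro h
    constructor
    · have := h a ha
      rcases this with h' | h'
      · right
        have := (pred_mem_iff ha hn3 (k := 0) (by omega)).1 (by simpa using h')
        simpa using this
      · left
        have := (succ_mem_iff ha hn3 (k := 0) (by omega)).1 (by simpa using h')
        rcases this with h'' | h''
        · omega
        · simpa using h''
    · intro k hk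
      have hk' := mem_qKset.1 hk
      have := h (a + (k : ZMod n)) hk'.2.2
      rcases this with h' | h'
      · left
        have := (pred_mem_iff ha hn3 hk'.2.1).1 h'
        rw [if_neg (by omega)] at this
        exact this
      · right
        exact (succ_mem_iff ha hn3 hk'.2.1).1 h'
  · rintro ⟨h0, hks⟩ i hi
    obtain ⟨j, hj, rfl⟩ := zmod_rep a i
    rcases (add_mem_iff ha hj).1 hi with rfl | hjK
    · rcases h0 with h' | h'
      · right
        rw [succ_mem_iff ha hn3 (by omega : (0:ℕ) < n)]
        right; simpa using h'
      · left
        rw [pred_mem_iff ha hn3 (by omega : (0:ℕ) < n), if_pos rfl]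
        exact h'
    · rcases hks j hjK with h' | h'
      · left
        rw [pred_mem_iff ha hn3 hj, if_neg (by have := (mem_qKset.1 hjK).1; omega)]
        exact h'
      · right
        rw [succ_mem_iff ha hn3 hj]
        exact h'

lemma exists_left_endpoint {S : Finset (ZMod n)} (hne : S.Nonempty)
    (hSu : S ≠ Finset.univ) : ∃ i ∈ S, i - 1 ∉ S := by
  classical
  obtain ⟨a, ha⟩ := hne
  have hb : ∃ b, b ∉ S := by
    by_contra h; push_neg at h; exact hSu (Finset.eq_univ_iff_forall.2 h)
  obtain ⟨b, hb⟩ := hb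
  have hex : ∃ m, b + ((m + 1 : ℕ) : ZMod n) ∈ S := by
    refine ⟨(a - b).val - 1, ?_⟩
    have hv : (a - b).val ≠ 0 := by
      intro h
      apply hb
      have h2 : a - b = 0 := by
        have := (ZMod.val_eq_zero (a - b)).1 h
        exact this
      have h3 : a = b := by
        have := sub_eq_zero.1 h2; exact this
      rwa [← h3]
    rw [show (a - b).val - 1 + 1 = (a - b).val by omega, ZMod.natCast_val, ZMod.cast_id]
    convert ha using 2
    ring
  let m := Nat.find hex
  refine ⟨b + ((m + 1 : ℕ) : ZMod n), Nat.find_spec hex, ?_⟩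
  have hc : b + ((m + 1 : ℕ) : ZMod n) - 1 = b + ((m : ℕ) : ZMod n) := by push_cast; ring
  rw [hc]
  rcases Nat.eq_zero_or_pos m with h0 | h1
  · rw [h0]; simpa using hb
  · obtain ⟨m', hm'⟩ := Nat.exists_eq_add_of_le h1
    have hmin := Nat.find_min hex (m := m') (by omega)
    rw [hm']
    simpa [Nat.add_comm] using hmin
end aux2

section aux3

def qt1 (K : Finset ℕ) : ℕ := (K.sort (·≤·)).getD 0 0
def qt2 (K : Finset ℕ) : ℕ := (K.sort (·≤·)).getD 1 0
def qt3 (K : Finset ℕ) : ℕ := (K.sort (·≤·)).getD 2 0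

lemma trip_spec {K : Finset ℕ} (h : K.card = 3) :
    qt1 K < qt2 K ∧ qt2 K < qt3 K ∧ K = {qt1 K, qt2 K, qt3 K} := by
  have hlen : (K.sort (·≤·)).length = 3 := by rw [Finset.length_sort]; exact h
  obtain ⟨a, b, c, hl⟩ := List.length_eq_three.1 hlen
  have hs := Finset.pairwise_sort K (·≤·)
  have hnd := Finset.sort_nodup K (·≤·)
  rw [hl] at hs hnd
  simp [List.pairwise_cons] at hs
  simp at hnd
  have e1 : qt1 K = a := by simp [qt1, hl]
  have e2 : qt2 K = b := by simp [qt2, hl]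
  have e3 : qt3 K = c := by simp [qt3, hl]
  have hKeq : K = {a, b, c} := by
    ext x
    rw [← Finset.mem_sort (r := (·≤·)), hl]
    simp
  rw [e1, e2, e3]
  refine ⟨?_, ?_, hKeq⟩ <;> omega

/-- arithmetic description of `natComp` for a 3-subset of `[1, n-1]` -/
lemma natComp_sorted {n : ℕ} {K : Finset ℕ} {a b c : ℕ} (habc : a < b ∧ b < c)
    (hK : K = {a, b, c}) (hsub : K ⊆ Finset.Ico 1 n) :
    natComp n K = (if c = n - 1 then 0 else 1)
      + ((if a = 1 then 0 else 1) + (if b = a + 1 then 0 else 1)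
        + (if c = b + 1 then 0 else 1)) := by
  have ha' : a ∈ Finset.Ico 1 n := hsub (by simp [hK])
  have hc' : c ∈ Finset.Ico 1 n := hsub (by simp [hK])
  simp only [Finset.mem_Ico] at ha' hc'
  have hmem : ∀ x, x ∈ K ↔ (x = a ∨ x = b ∨ x = c) := by
    intro x; rw [hK]; simp
  have h1 : (n - 1 ∈ K) ↔ (c = n - 1) := by rw [hmem]; omega
  have hcard : (K.filter (fun k => ¬(k = 1 ∨ k - 1 ∈ K))).card
      = (if ¬(a = 1 ∨ a - 1 ∈ K) then 1 else 0)
        + (if ¬(b = 1 ∨ b - 1 ∈ K) then 1 else 0)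
        + (if ¬(c = 1 ∨ c - 1 ∈ K) then 1 else 0) := by
    classical
    rw [hK, Finset.card_filter,
      Finset.sum_insert (by simp; omega), Finset.sum_insert (by simp; omega),
      Finset.sum_singleton]
    ring
  rw [natComp, hcard]
  have hA : ¬(a = 1 ∨ a - 1 ∈ K) ↔ ¬ a = 1 := by rw [hmem]; omega
  have hB : ¬(b = 1 ∨ b - 1 ∈ K) ↔ ¬ b = a + 1 := by rw [hmem]; omega
  have hC : ¬(c = 1 ∨ c - 1 ∈ K) ↔ ¬ c = b + 1 := by rw [hmem]; omega
  rw [if_congr h1 rfl rfl, if_congr hA rfl rfl, if_congr hB rfl rfl, if_congr hC rfl rfl]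
  split_ifs <;> omega

lemma natNoSing_sorted {n : ℕ} {K : Finset ℕ} {a b c : ℕ} (habc : a < b ∧ b < c)
    (hK : K = {a, b, c}) :
    natNoSing n K ↔ ((1 = a ∨ 1 = b ∨ 1 = c) ∨ (n - 1 = a ∨ n - 1 = b ∨ n - 1 = c)) ∧
      (∀ k, (k = a ∨ k = b ∨ k = c) →
        ((k = 1 ∨ (k - 1 = a ∨ k - 1 = b ∨ k - 1 = c))
          ∨ (k = n - 1 ∨ (k + 1 = a ∨ k + 1 = b ∨ k + 1 = c)))) := by
  have hmem : ∀ x, x ∈ K ↔ (x = a ∨ x = b ∨ x = c) := by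
    intro x; rw [hK]; simp
  constructor
  · rintro ⟨h0, h1⟩
    constructor
    · rcases h0 with h | h
      · left; have := (hmem 1).1 h; omega
      · right; have := (hmem (n-1)).1 h; omega
    · intro k hk
      have := h1 k ((hmem k).2 hk)
      rcases this with (h | h) | (h | h)
      · left; left; exact h
      · left; right; exact (hmem _).1 h
      · right; left; exact h
      · right; right; exact (hmem _).1 h
  · rintro ⟨h0, h1⟩
    constructor
    · rcases h0 with h | h
      · left; rw [hmem]; omega
      · right; rw [hmem]; omega
    · intro k hk
      have := h1 k ((hmem k).1 hk)
      rcases this with (h | h) | (h | h)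
      · left; left; exact h
      · left; right; rw [hmem]; exact h
      · right; left; exact h
      · right; right; rw [hmem]; exact h

end aux3

section aux4

instance (n : ℕ) : DecidablePred (natNoSing n) := fun K => by
  unfold natNoSing; infer_instance

def natW (n : ℕ) (K : Finset ℕ) : ℕ :=
  if natComp n K = 4 then 2
  else if natComp n K = 3 then 1
  else if natComp n K = 2 ∧ natNoSing n K then 1 else 0

lemma triple_eq {x1 x2 x3 y1 y2 y3 : ℕ} (h12 : x1 < x2) (h23 : x2 < x3)
    (g12 : y1 < y2) (g23 : y2 < y3) (h : ({x1, x2, x3} : Finset ℕ) = {y1, y2, y3}) :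
    x1 = y1 ∧ x2 = y2 ∧ x3 = y3 := by
  have h1 := Finset.ext_iff.1 h x1
  have h2 := Finset.ext_iff.1 h x2
  have h3 := Finset.ext_iff.1 h x3
  have h4 := Finset.ext_iff.1 h y1
  have h5 := Finset.ext_iff.1 h y2
  have h6 := Finset.ext_iff.1 h y3
  simp at h1 h2 h3 h4 h5 h6
  omega

lemma pair_eq {x1 x2 y1 y2 : ℕ} (h12 : x1 < x2) (g12 : y1 < y2)
    (h : ({x1, x2} : Finset ℕ) = {y1, y2}) : x1 = y1 ∧ x2 = y2 := by
  have h1 := Finset.ext_iff.1 h x1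
  have h2 := Finset.ext_iff.1 h x2
  have h3 := Finset.ext_iff.1 h y1
  have h4 := Finset.ext_iff.1 h y2
  simp at h1 h2 h3 h4
  omega

def f4 (K : Finset ℕ) : Finset ℕ := {qt1 K - 2, qt2 K - 3, qt3 K - 4}

def f3 (K : Finset ℕ) : ℕ × Finset ℕ :=
  if qt1 K = 1 then (0, {qt2 K - 3, qt3 K - 4})
  else if qt2 K = qt1 K + 1 then (1, {qt1 K - 2, qt3 K - 4})
  else if qt3 K = qt2 K + 1 then (2, {qt1 K - 2, qt2 K - 3})
  else (3, {qt1 K - 2, qt2 K - 3})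

def f22 (K : Finset ℕ) : ℕ × ℕ := if qt1 K = 1 then (0, qt2 K - 3) else (1, qt1 K - 2)

/-- facts about a member of `powersetCard 3 (Ico 1 n)` -/
lemma psc_facts {n : ℕ} {K : Finset ℕ} (hP : K ∈ Finset.powersetCard 3 (Finset.Ico 1 n)) :
    qt1 K < qt2 K ∧ qt2 K < qt3 K ∧ K = {qt1 K, qt2 K, qt3 K} ∧
      1 ≤ qt1 K ∧ qt3 K < n := by
  obtain ⟨hsub, hcard⟩ := Finset.mem_powersetCard.1 hP
  obtain ⟨h12, h23, hK⟩ := trip_spec hcard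
  have hsup : ({qt1 K, qt2 K, qt3 K} : Finset ℕ) ⊆ K := by rw [← hK]
  have h1 : qt1 K ∈ Finset.Ico 1 n := hsub (hsup (by simp))
  have h3 : qt3 K ∈ Finset.Ico 1 n := hsub (hsup (by simp))
  simp only [Finset.mem_Ico] at h1 h3
  exact ⟨h12, h23, hK, h1.1, h3.2⟩

lemma class4_desc {n : ℕ} {K : Finset ℕ} (hP : K ∈ Finset.powersetCard 3 (Finset.Ico 1 n))
    (h : natComp n K = 4) :
    2 ≤ qt1 K ∧ qt1 K + 2 ≤ qt2 K ∧ qt2 K + 2 ≤ qt3 K ∧ qt3 K + 2 ≤ n := by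
  obtain ⟨h12, h23, hK, h1, h3⟩ := psc_facts hP
  rw [natComp_sorted ⟨h12, h23⟩ hK (Finset.mem_powersetCard.1 hP).1] at h
  split_ifs at h <;> omega

set_option maxHeartbeats 2000000 in
lemma class3_desc {n : ℕ} {K : Finset ℕ} (hP : K ∈ Finset.powersetCard 3 (Finset.Ico 1 n))
    (h : natComp n K = 3) :
    (qt1 K = 1 ∧ 3 ≤ qt2 K ∧ qt2 K + 2 ≤ qt3 K ∧ qt3 K + 2 ≤ n) ∨
    (qt1 K ≠ 1 ∧ qt2 K = qt1 K + 1 ∧ 2 ≤ qt1 K ∧ qt2 K + 2 ≤ qt3 K ∧ qt3 K + 2 ≤ n) ∨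
    (qt1 K ≠ 1 ∧ qt2 K ≠ qt1 K + 1 ∧ qt3 K = qt2 K + 1 ∧ 2 ≤ qt1 K ∧
      qt1 K + 2 ≤ qt2 K ∧ qt3 K + 2 ≤ n) ∨
    (qt1 K ≠ 1 ∧ qt2 K ≠ qt1 K + 1 ∧ qt3 K ≠ qt2 K + 1 ∧ qt3 K = n - 1 ∧ 2 ≤ qt1 K ∧
      qt1 K + 2 ≤ qt2 K ∧ qt2 K + 2 ≤ qt3 K) := by
  obtain ⟨h12, h23, hK, h1, h3⟩ := psc_facts hP
  rw [natComp_sorted ⟨h12, h23⟩ hK (Finset.mem_powersetCard.1 hP).1] at h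
  split_ifs at h <;> omega

set_option maxHeartbeats 2000000 in
lemma class22_desc {n : ℕ} {K : Finset ℕ} (hP : K ∈ Finset.powersetCard 3 (Finset.Ico 1 n))
    (h2 : natComp n K = 2) (hs : natNoSing n K) :
    (qt1 K = 1 ∧ qt3 K = qt2 K + 1 ∧ 3 ≤ qt2 K ∧ qt3 K + 2 ≤ n) ∨
    (qt1 K ≠ 1 ∧ qt2 K = qt1 K + 1 ∧ qt3 K = n - 1 ∧ 2 ≤ qt1 K ∧ qt2 K + 2 ≤ qt3 K) := by
  obtain ⟨h12, h23, hK, h1, h3⟩ := psc_facts hP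
  rw [natComp_sorted ⟨h12, h23⟩ hK (Finset.mem_powersetCard.1 hP).1] at h2
  rw [natNoSing_sorted ⟨h12, h23⟩ hK] at hs
  obtain ⟨hs0, hs1⟩ := hs
  have ha := hs1 (qt1 K) (by omega)
  have hb := hs1 (qt2 K) (by omega)
  have hc := hs1 (qt3 K) (by omega)
  split_ifs at h2 <;> omega

end aux4

section aux5
open Finset

lemma qt_triple {x y z : ℕ} (hxy : x < y) (hyz : y < z) :
    qt1 ({x, y, z} : Finset ℕ) = x ∧ qt2 ({x, y, z} : Finset ℕ) = y ∧
      qt3 ({x, y, z} : Finset ℕ) = z := by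
  have hcard : ({x, y, z} : Finset ℕ).card = 3 :=
    Finset.card_eq_three.2 ⟨x, y, z, by omega, by omega, by omega, rfl⟩
  obtain ⟨h12, h23, hK⟩ := trip_spec hcard
  have := triple_eq hxy hyz h12 h23 hK
  exact ⟨this.1.symm, this.2.1.symm, this.2.2.symm⟩

lemma pair_spec {s : Finset ℕ} (h : s.card = 2) :
    qt1 s < qt2 s ∧ s = {qt1 s, qt2 s} := by
  have hlen : (s.sort (·≤·)).length = 2 := by rw [Finset.length_sort]; exact h
  obtain ⟨a, b, hl⟩ := List.length_eq_two.1 hlen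
  have hs := Finset.pairwise_sort s (·≤·)
  have hnd := Finset.sort_nodup s (·≤·)
  rw [hl] at hs hnd
  simp [List.pairwise_cons] at hs
  simp at hnd
  have e1 : qt1 s = a := by simp [qt1, hl]
  have e2 : qt2 s = b := by simp [qt2, hl]
  have hKeq : s = {a, b} := by
    ext x
    rw [← Finset.mem_sort (r := (·≤·)), hl]
    simp
  rw [e1, e2]
  exact ⟨by omega, hKeq⟩

lemma qt_pair {x y : ℕ} (hxy : x < y) :
    qt1 ({x, y} : Finset ℕ) = x ∧ qt2 ({x, y} : Finset ℕ) = y := by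
  have hcard : ({x, y} : Finset ℕ).card = 2 := Finset.card_eq_two.2 ⟨x, y, by omega, rfl⟩
  obtain ⟨h12, hK⟩ := pair_spec hcard
  have := pair_eq hxy h12 hK
  exact ⟨this.1.symm, this.2.symm⟩

lemma bound4 {n : ℕ} :
    ((Finset.powersetCard 3 (Finset.Ico 1 n)).filter (fun K => natComp n K = 4)).card
      ≤ Nat.choose (n - 5) 3 := by
  classical
  calc ((Finset.powersetCard 3 (Finset.Ico 1 n)).filter (fun K => natComp n K = 4)).card
      ≤ (Finset.powersetCard 3 (Finset.range (n - 5))).card := by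
        apply Finset.card_le_card_of_injOn f4
        · intro K hK
          obtain ⟨hP, h4⟩ := Finset.mem_filter.1 hK
          obtain ⟨d1, d2, d3, d4⟩ := class4_desc hP h4
          rw [Finset.mem_coe, Finset.mem_powersetCard]
          constructor
          · intro x hx
            simp only [f4, Finset.mem_insert, Finset.mem_singleton] at hx
            rw [Finset.mem_range]
            rcases hx with rfl | rfl | rfl <;> omega
          · exact Finset.card_eq_three.2 ⟨_, _, _, by omega, by omega, by omega, rfl⟩
        · intro K hK K' hK'
          intro heq
          obtain ⟨hP, h4⟩ := Finset.mem_filter.1 hK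
          obtain ⟨hP', h4'⟩ := Finset.mem_filter.1 hK'
          obtain ⟨d1, d2, d3, d4⟩ := class4_desc hP h4
          obtain ⟨e1, e2, e3, e4⟩ := class4_desc hP' h4'
          obtain ⟨_, _, hKt, _, _⟩ := psc_facts hP
          obtain ⟨_, _, hKt', _, _⟩ := psc_facts hP'
          have q1 := qt_triple (x := qt1 K - 2) (y := qt2 K - 3) (z := qt3 K - 4)
            (by omega) (by omega)
          have q2 := qt_triple (x := qt1 K' - 2) (y := qt2 K' - 3) (z := qt3 K' - 4)
            (by omega) (by omega)
          have h1 : qt1 K - 2 = qt1 K' - 2 := by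
            rw [← q1.1, ← q2.1]; exact congrArg qt1 heq
          have h2 : qt2 K - 3 = qt2 K' - 3 := by
            rw [← q1.2.1, ← q2.2.1]; exact congrArg qt2 heq
          have h3 : qt3 K - 4 = qt3 K' - 4 := by
            rw [← q1.2.2, ← q2.2.2]; exact congrArg qt3 heq
          rw [hKt, hKt']
          rw [show qt1 K = qt1 K' by omega, show qt2 K = qt2 K' by omega,
            show qt3 K = qt3 K' by omega]
    _ = Nat.choose (n - 5) 3 := by rw [Finset.card_powersetCard, Finset.card_range]

end aux5

section aux6
open Finset

def g3 (n : ℕ) (p : ℕ × Finset ℕ) : ℕ × ℕ × ℕ :=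
  if p.1 = 0 then (1, qt1 p.2 + 3, qt2 p.2 + 4)
  else if p.1 = 1 then (qt1 p.2 + 2, qt1 p.2 + 3, qt2 p.2 + 4)
  else if p.1 = 2 then (qt1 p.2 + 2, qt2 p.2 + 3, qt2 p.2 + 4)
  else (qt1 p.2 + 2, qt2 p.2 + 3, n - 1)

lemma recov3 {n : ℕ} {K : Finset ℕ} (hP : K ∈ Finset.powersetCard 3 (Finset.Ico 1 n))
    (h3 : natComp n K = 3) :
    g3 n (f3 K) = (qt1 K, qt2 K, qt3 K) ∧
      f3 K ∈ Finset.range 4 ×ˢ Finset.powersetCard 2 (Finset.range (n - 5)) := by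
  classical
  rcases class3_desc hP h3 with ⟨c1, c2, c3, c4⟩ | ⟨c1, c2, c3, c4, c5⟩ |
    ⟨c1, c2, c3, c4, c5, c6⟩ | ⟨c1, c2, c3, c4, c5, c6, c7⟩
  · have hf : f3 K = (0, {qt2 K - 3, qt3 K - 4}) := by unfold f3; rw [if_pos c1]
    have hq := qt_pair (x := qt2 K - 3) (y := qt3 K - 4) (by omega)
    refine ⟨?_, ?_⟩
    · rw [hf]; unfold g3; norm_num
      rw [hq.1, hq.2]
      omega
    · rw [hf, Finset.mem_product]
      refine ⟨by simp, Finset.mem_powersetCard.2 ⟨?_, Finset.card_eq_two.2 ⟨_, _, by omega, rfl⟩⟩⟩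
      intro x hx
      simp only [Finset.mem_insert, Finset.mem_singleton] at hx
      rw [Finset.mem_range]
      rcases hx with rfl | rfl <;> omega
  · have hf : f3 K = (1, {qt1 K - 2, qt3 K - 4}) := by
      unfold f3; rw [if_neg c1, if_pos c2]
    have hq := qt_pair (x := qt1 K - 2) (y := qt3 K - 4) (by omega)
    refine ⟨?_, ?_⟩
    · rw [hf]; unfold g3; norm_num
      rw [hq.1, hq.2]
      omega
    · rw [hf, Finset.mem_product]
      refine ⟨by simp, Finset.mem_powersetCard.2 ⟨?_, Finset.card_eq_two.2 ⟨_, _, by omega, rfl⟩⟩⟩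
      intro x hx
      simp only [Finset.mem_insert, Finset.mem_singleton] at hx
      rw [Finset.mem_range]
      rcases hx with rfl | rfl <;> omega
  · have hf : f3 K = (2, {qt1 K - 2, qt2 K - 3}) := by
      unfold f3; rw [if_neg c1, if_neg c2, if_pos c3]
    have hq := qt_pair (x := qt1 K - 2) (y := qt2 K - 3) (by omega)
    refine ⟨?_, ?_⟩
    · rw [hf]; unfold g3; norm_num
      rw [hq.1, hq.2]
      omega
    · rw [hf, Finset.mem_product]
      refine ⟨by simp, Finset.mem_powersetCard.2 ⟨?_, Finset.card_eq_two.2 ⟨_, _, by omega, rfl⟩⟩⟩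
      intro x hx
      simp only [Finset.mem_insert, Finset.mem_singleton] at hx
      rw [Finset.mem_range]
      rcases hx with rfl | rfl <;> omega
  · have hf : f3 K = (3, {qt1 K - 2, qt2 K - 3}) := by
      unfold f3; rw [if_neg c1, if_neg c2, if_neg c3]
    have hq := qt_pair (x := qt1 K - 2) (y := qt2 K - 3) (by omega)
    refine ⟨?_, ?_⟩
    · rw [hf]; unfold g3; norm_num
      rw [hq.1, hq.2]
      omega
    · rw [hf, Finset.mem_product]
      refine ⟨by simp, Finset.mem_powersetCard.2 ⟨?_, Finset.card_eq_two.2 ⟨_, _, by omega, rfl⟩⟩⟩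
      intro x hx
      simp only [Finset.mem_insert, Finset.mem_singleton] at hx
      rw [Finset.mem_range]
      rcases hx with rfl | rfl <;> omega

lemma bound3 {n : ℕ} :
    ((Finset.powersetCard 3 (Finset.Ico 1 n)).filter (fun K => natComp n K = 3)).card
      ≤ 4 * Nat.choose (n - 5) 2 := by
  classical
  calc ((Finset.powersetCard 3 (Finset.Ico 1 n)).filter (fun K => natComp n K = 3)).card
      ≤ (Finset.range 4 ×ˢ Finset.powersetCard 2 (Finset.range (n - 5))).card := by
        apply Finset.card_le_card_of_injOn f3
        · intro K hK
          obtain ⟨hP, h3⟩ := Finset.mem_filter.1 hK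
          exact (recov3 hP h3).2
        · intro K hK K' hK' heq
          obtain ⟨hP, h3⟩ := Finset.mem_filter.1 hK
          obtain ⟨hP', h3'⟩ := Finset.mem_filter.1 hK'
          have r := (recov3 hP h3).1
          have r' := (recov3 hP' h3').1
          rw [heq] at r
          rw [r'] at r
          obtain ⟨_, _, hKt, _, _⟩ := psc_facts hP
          obtain ⟨_, _, hKt', _, _⟩ := psc_facts hP'
          simp only [Prod.mk.injEq] at r
          rw [hKt, hKt', r.1, r.2.1, r.2.2]
    _ = 4 * Nat.choose (n - 5) 2 := by
        rw [Finset.card_product, Finset.card_powersetCard, Finset.card_range,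
          Finset.card_range]

def g22 (n : ℕ) (p : ℕ × ℕ) : ℕ × ℕ × ℕ :=
  if p.1 = 0 then (1, p.2 + 3, p.2 + 4) else (p.2 + 2, p.2 + 3, n - 1)

lemma recov22 {n : ℕ} {K : Finset ℕ} (hP : K ∈ Finset.powersetCard 3 (Finset.Ico 1 n))
    (h2 : natComp n K = 2) (hs : natNoSing n K) :
    g22 n (f22 K) = (qt1 K, qt2 K, qt3 K) ∧
      f22 K ∈ Finset.range 2 ×ˢ Finset.range (n - 5) := by
  rcases class22_desc hP h2 hs with ⟨c1, c2, c3, c4⟩ | ⟨c1, c2, c3, c4, c5⟩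
  · have hf : f22 K = (0, qt2 K - 3) := by unfold f22; rw [if_pos c1]
    refine ⟨?_, ?_⟩
    · rw [hf]; unfold g22; norm_num
      omega
    · rw [hf, Finset.mem_product]
      constructor <;> simp only [Finset.mem_range] <;> omega
  · have hf : f22 K = (1, qt1 K - 2) := by unfold f22; rw [if_neg c1]
    refine ⟨?_, ?_⟩
    · rw [hf]; unfold g22; norm_num
      obtain ⟨h12, h23, _, h1, h3⟩ := psc_facts hP
      omega
    · rw [hf, Finset.mem_product]
      obtain ⟨h12, h23, _, h1, h3⟩ := psc_facts hP
      constructor <;> simp only [Finset.mem_range] <;> omega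

lemma bound22 {n : ℕ} :
    ((Finset.powersetCard 3 (Finset.Ico 1 n)).filter
        (fun K => natComp n K = 2 ∧ natNoSing n K)).card ≤ 2 * (n - 5) := by
  classical
  calc ((Finset.powersetCard 3 (Finset.Ico 1 n)).filter
        (fun K => natComp n K = 2 ∧ natNoSing n K)).card
      ≤ (Finset.range 2 ×ˢ Finset.range (n - 5)).card := by
        apply Finset.card_le_card_of_injOn f22
        · intro K hK
          obtain ⟨hP, h2, hs⟩ := Finset.mem_filter.1 hK
          exact (recov22 hP h2 hs).2
        · intro K hK K' hK' heq
          obtain ⟨hP, h2, hs⟩ := Finset.mem_filter.1 hK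
          obtain ⟨hP', h2', hs'⟩ := Finset.mem_filter.1 hK'
          have r := (recov22 hP h2 hs).1
          have r' := (recov22 hP' h2' hs').1
          rw [heq] at r
          rw [r'] at r
          obtain ⟨_, _, hKt, _, _⟩ := psc_facts hP
          obtain ⟨_, _, hKt', _, _⟩ := psc_facts hP'
          simp only [Prod.mk.injEq] at r
          rw [hKt, hKt', r.1, r.2.1, r.2.2]
    _ = 2 * (n - 5) := by rw [Finset.card_product, Finset.card_range, Finset.card_range]

end aux6

section aux7

lemma two_choose (x : ℕ) : 2 * Nat.choose x 2 + x = x * x := by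
  induction x with
  | zero => rfl
  | succ x ih =>
    rw [Nat.choose_succ_succ, Nat.choose_one_right]
    zify at ih ⊢
    linear_combination ih

lemma main_id (x : ℕ) :
    3 * (2 * Nat.choose x 3 + 4 * Nat.choose x 2 + 2 * x) = (x + 2) * (x + 1) * x := by
  induction x with
  | zero => rfl
  | succ x ih =>
    have h2 := two_choose x
    rw [Nat.choose_succ_succ x 2, Nat.choose_succ_succ x 1, Nat.choose_one_right]
    zify at ih h2 ⊢
    linear_combination ih + 3 * h2

lemma key_count (n : ℕ) :
    3 * ∑ K ∈ Finset.powersetCard 3 (Finset.Ico 1 n), natW n K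
      ≤ (n - 3) * (n - 4) * (n - 5) := by
  have hpt : ∀ K ∈ Finset.powersetCard 3 (Finset.Ico 1 n), natW n K ≤ 2 * (if natComp n K = 4 then 1 else 0)
      + (if natComp n K = 3 then 1 else 0)
      + (if natComp n K = 2 ∧ natNoSing n K then 1 else 0) := by
    intro K _
    unfold natW
    split_ifs <;> omega
  have hsum : ∑ K ∈ Finset.powersetCard 3 (Finset.Ico 1 n), natW n K ≤
      2 * ((Finset.powersetCard 3 (Finset.Ico 1 n)).filter (fun K => natComp n K = 4)).card
      + ((Finset.powersetCard 3 (Finset.Ico 1 n)).filter (fun K => natComp n K = 3)).card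
      + ((Finset.powersetCard 3 (Finset.Ico 1 n)).filter (fun K => natComp n K = 2 ∧ natNoSing n K)).card := by
    calc ∑ K ∈ Finset.powersetCard 3 (Finset.Ico 1 n), natW n K ≤ ∑ K ∈ Finset.powersetCard 3 (Finset.Ico 1 n), (2 * (if natComp n K = 4 then 1 else 0)
        + (if natComp n K = 3 then 1 else 0)
        + (if natComp n K = 2 ∧ natNoSing n K then 1 else 0)) := Finset.sum_le_sum hpt
      _ = _ := by
        rw [Finset.sum_add_distrib, Finset.sum_add_distrib, ← Finset.mul_sum]
        simp [Finset.sum_boole]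
  have hb4 := bound4 (n := n)
  have hb3 := bound3 (n := n)
  have hb22 := bound22 (n := n)
  have harith := main_id (n - 5)
  have hle : ((n - 5) + 2) * ((n - 5) + 1) * (n - 5) ≤ (n - 3) * (n - 4) * (n - 5) := by
    rcases le_or_gt 5 n with h | h
    · rw [show (n - 5) + 2 = n - 3 by omega, show (n - 5) + 1 = n - 4 by omega]
    · rw [show n - 5 = 0 by omega]
      simp
  calc 3 * ∑ K ∈ Finset.powersetCard 3 (Finset.Ico 1 n), natW n K
      ≤ 3 * (2 * Nat.choose (n - 5) 3 + 4 * Nat.choose (n - 5) 2 + 2 * (n - 5)) := by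
        omega
    _ = ((n - 5) + 2) * ((n - 5) + 1) * (n - 5) := harith
    _ ≤ _ := hle

end aux7

section aux8
variable {n : ℕ} [NeZero n]

def wS (n : ℕ) [NeZero n] (S : Finset (ZMod n)) : ℕ :=
  if cyclicComponents n S = 4 then 2
  else if cyclicComponents n S = 3 then 1
  else if cyclicComponents n S = 2 ∧ ∀ i ∈ S, i - 1 ∈ S ∨ i + 1 ∈ S then 1 else 0

lemma wS_le {S : Finset (ZMod n)} {a : ZMod n} (ha : a ∈ S) (hn3 : 3 ≤ n) :
    wS n S ≤ natW n (qKset n S a) := by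
  classical
  by_cases hSu : S = Finset.univ
  · have h1 : cyclicComponents n S = 1 := by rw [cyclicComponents, if_pos hSu]
    unfold wS
    rw [h1]
    norm_num
  · have hc := comp_eq ha hSu hn3
    have hns := noSing_iff ha hn3
    unfold wS natW
    rw [hc]
    by_cases h4 : natComp n (qKset n S a) = 4
    · rw [if_pos h4, if_pos h4]
    · rw [if_neg h4, if_neg h4]
      by_cases h3 : natComp n (qKset n S a) = 3
      · rw [if_pos h3, if_pos h3]
      · rw [if_neg h3, if_neg h3]
        by_cases hcond : ∀ i ∈ S, i - 1 ∈ S ∨ i + 1 ∈ S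
        · by_cases h2 : natComp n (qKset n S a) = 2
          · rw [if_pos ⟨h2, hcond⟩, if_pos ⟨h2, hns.1 hcond⟩]
          · rw [if_neg (by tauto), if_neg (by tauto)]
        · rw [if_neg (by tauto)]
          exact Nat.zero_le _
end aux8

/-- Abstract counting argument for the Main Theorem. Suppose each 4-element subset `S`
of `ZMod n` carries a finite set `Q S` of quadrisecants with: `Q S = ∅` if `S` has one
component, or two components one of which is a singleton; `|Q S| ≤ 1` if `S` has two
components each of size two, or three components; `|Q S| ≤ 2` if `S` has four
components. If the sets `Q S` are pairwise disjoint and every quadrisecant in `T`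
lies in some `Q S`, then `|T| ≤ n(n-3)(n-4)(n-5)/12`. -/
theorem quadrisecant_count_bound {α : Type*} [DecidableEq α] (n : ℕ) [NeZero n]
    (hn : 3 ≤ n) (Q : Finset (ZMod n) → Finset α) (T : Finset α)
    (h1 : ∀ S : Finset (ZMod n), S.card = 4 → cyclicComponents n S = 1 → Q S = ∅)
    (h21 : ∀ S : Finset (ZMod n), S.card = 4 → cyclicComponents n S = 2 →
      (∃ i ∈ S, i - 1 ∉ S ∧ i + 1 ∉ S) → Q S = ∅)
    (h22 : ∀ S : Finset (ZMod n), S.card = 4 → cyclicComponents n S = 2 →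
      (∀ i ∈ S, i - 1 ∈ S ∨ i + 1 ∈ S) → (Q S).card ≤ 1)
    (h3 : ∀ S : Finset (ZMod n), S.card = 4 → cyclicComponents n S = 3 → (Q S).card ≤ 1)
    (h4 : ∀ S : Finset (ZMod n), S.card = 4 → cyclicComponents n S = 4 → (Q S).card ≤ 2)
    (hdisj : ∀ S S' : Finset (ZMod n), S ≠ S' → Disjoint (Q S) (Q S'))
    (hcover : ∀ q ∈ T, ∃ S : Finset (ZMod n), S.card = 4 ∧ q ∈ Q S) :
    T.card ≤ n * (n - 3) * (n - 4) * (n - 5) / 12 := by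
  classical
  set 𝒮 : Finset (Finset (ZMod n)) := Finset.univ.filter (fun S => S.card = 4) with h𝒮
  have hTsub : T ⊆ 𝒮.biUnion Q := by
    intro q hq
    obtain ⟨S, hS4, hqS⟩ := hcover q hq
    exact Finset.mem_biUnion.2 ⟨S, by simp [h𝒮, hS4], hqS⟩
  have hstep1 : T.card ≤ ∑ S ∈ 𝒮, (Q S).card :=
    (Finset.card_le_card hTsub).trans Finset.card_biUnion_le
  have hQw : ∀ S ∈ 𝒮, (Q S).card ≤ wS n S := by
    intro S hS
    have h4S : S.card = 4 := (Finset.mem_filter.1 hS).2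
    have hminmax : 1 ≤ cyclicComponents n S ∧ cyclicComponents n S ≤ 4 := by
      unfold cyclicComponents
      split_ifs with h
      · omega
      · constructor
        · have hne : S.Nonempty := Finset.card_pos.1 (by omega)
          obtain ⟨i, hi, hi'⟩ := exists_left_endpoint hne h
          have hmem : i ∈ S.filter (fun i => i - 1 ∉ S) := Finset.mem_filter.2 ⟨hi, hi'⟩
          have := Finset.card_pos.2 ⟨i, hmem⟩
          omega
        · have := Finset.card_filter_le S (fun i => i - 1 ∉ S)
          omega
    have hcases : cyclicComponents n S = 1 ∨ cyclicComponents n S = 2 ∨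
        cyclicComponents n S = 3 ∨ cyclicComponents n S = 4 := by omega
    rcases hcases with h | h | h | h
    · rw [h1 S h4S h]
      simp
    · by_cases hcond : ∀ i ∈ S, i - 1 ∈ S ∨ i + 1 ∈ S
      · have hb := h22 S h4S h hcond
        unfold wS
        rw [if_neg (by omega), if_neg (by omega), if_pos ⟨h, hcond⟩]
        exact hb
      · push_neg at hcond
        obtain ⟨i, hi, hi1, hi2⟩ := hcond
        rw [h21 S h4S h ⟨i, hi, hi1, hi2⟩]
        simp
    · unfold wS
      rw [if_neg (by omega), if_pos h]
      exact h3 S h4S h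
    · unfold wS
      rw [if_pos h]
      exact h4 S h4S h
  have hstep2 : ∑ S ∈ 𝒮, (Q S).card ≤ ∑ S ∈ 𝒮, wS n S := Finset.sum_le_sum hQw
  set P : Finset (Σ _ : Finset (ZMod n), ZMod n) := 𝒮.sigma (fun S => S) with hPdef
  have hsig : ∑ p ∈ P, wS n p.1 = 4 * ∑ S ∈ 𝒮, wS n S := by
    rw [hPdef, Finset.sum_sigma, Finset.mul_sum]
    apply Finset.sum_congr rfl
    intro S hS
    show ∑ _s ∈ S, wS n S = 4 * wS n S
    rw [Finset.sum_const, smul_eq_mul, (Finset.mem_filter.1 hS).2]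
  have hmem : ∀ p ∈ P, p.1.card = 4 ∧ p.2 ∈ p.1 := by
    intro p hp
    have := Finset.mem_sigma.1 hp
    exact ⟨(Finset.mem_filter.1 this.1).2, this.2⟩
  have hptw : ∀ p ∈ P, wS n p.1 ≤ natW n (qKset n p.1 p.2) :=
    fun p hp => wS_le (hmem p hp).2 hn
  have hinj : ∀ p ∈ P, ∀ p' ∈ P,
      (fun p : Σ _ : Finset (ZMod n), ZMod n => (p.2, qKset n p.1 p.2)) p
        = (fun p : Σ _ : Finset (ZMod n), ZMod n => (p.2, qKset n p.1 p.2)) p' → p = p' := by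
    rintro ⟨S, a⟩ hp ⟨S', a'⟩ hp' heq
    simp only [Prod.mk.injEq] at heq
    obtain ⟨ha, hK⟩ := heq
    subst ha
    have haS : a ∈ S := (hmem _ hp).2
    have haS' : a ∈ S' := (hmem _ hp').2
    have hSS : S = S' := by
      ext x
      obtain ⟨j, hj, rfl⟩ := zmod_rep a x
      rcases Nat.eq_zero_or_pos j with rfl | hjpos
      · simp [haS, haS']
      · rw [add_mem_iff haS hj, add_mem_iff haS' hj, hK]
    subst hSS
    rfl
  have himg : ∑ q ∈ P.image (fun p => (p.2, qKset n p.1 p.2)), natW n q.2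
      = ∑ p ∈ P, natW n (qKset n p.1 p.2) := Finset.sum_image hinj
  have hsub2 : P.image (fun p => (p.2, qKset n p.1 p.2))
      ⊆ Finset.univ ×ˢ Finset.powersetCard 3 (Finset.Ico 1 n) := by
    intro q hq
    obtain ⟨p, hp, rfl⟩ := Finset.mem_image.1 hq
    rw [Finset.mem_product]
    exact ⟨Finset.mem_univ _, Finset.mem_powersetCard.2
      ⟨Finset.filter_subset _ _, card_qKset (hmem p hp).2 (hmem p hp).1⟩⟩
  have hbig : ∑ q ∈ P.image (fun p => (p.2, qKset n p.1 p.2)), natW n q.2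
      ≤ ∑ q ∈ Finset.univ ×ˢ Finset.powersetCard 3 (Finset.Ico 1 n), natW n q.2 :=
    Finset.sum_le_sum_of_subset hsub2
  have hprod : ∑ q ∈ (Finset.univ : Finset (ZMod n)) ×ˢ Finset.powersetCard 3 (Finset.Ico 1 n), natW n q.2
      = n * ∑ K ∈ Finset.powersetCard 3 (Finset.Ico 1 n), natW n K := by
    rw [Finset.sum_product]
    show ∑ _x : ZMod n, ∑ K ∈ Finset.powersetCard 3 (Finset.Ico 1 n), natW n K = _
    rw [Finset.sum_const, smul_eq_mul, Finset.card_univ, ZMod.card]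
  have hptsum : ∑ p ∈ P, wS n p.1 ≤ ∑ p ∈ P, natW n (qKset n p.1 p.2) :=
    Finset.sum_le_sum hptw
  have hKc := key_count n
  rw [Nat.le_div_iff_mul_le (by norm_num : 0 < 12)]
  have hfinal : 12 * T.card ≤ n * ((n - 3) * (n - 4) * (n - 5)) := by
    calc 12 * T.card ≤ 12 * ∑ S ∈ 𝒮, wS n S := by omega
      _ = 3 * ∑ p ∈ P, wS n p.1 := by omega
      _ ≤ 3 * ∑ p ∈ P, natW n (qKset n p.1 p.2) := by omega
      _ = 3 * ∑ q ∈ P.image (fun p => (p.2, qKset n p.1 p.2)), natW n q.2 := by rw [himg]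
      _ ≤ 3 * (n * ∑ K ∈ Finset.powersetCard 3 (Finset.Ico 1 n), natW n K) := by
          rw [← hprod]; omega
      _ = n * (3 * ∑ K ∈ Finset.powersetCard 3 (Finset.Ico 1 n), natW n K) := by ring
      _ ≤ n * ((n - 3) * (n - 4) * (n - 5)) := Nat.mul_le_mul_left n hKc
  calc T.card * 12 = 12 * T.card := by ring
    _ ≤ n * ((n - 3) * (n - 4) * (n - 5)) := hfinal
    _ = n * (n - 3) * (n - 4) * (n - 5) := by ring
end
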